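/- Let N = 3 and θ = (0, 3π/4, 5π/4). Then θ is a critical point of V (all three partial derivatives of V vanish at θ), and the Hessian of V at θ has exactly one strictly positive eigenvalue, exactly one strictly negative eigenvalue, and one zero eigenvalue (with eigenvector (1,1,1)); i.e. θ is a nondegenerate saddle point of V. -/

import Mathlib

open Real Finset Matrix

/-- The limit potential of the (1+N)-vortex problem:
`V(θ) = -∑_{i<j} (cos(θᵢ-θⱼ) + (1/2)·log(2 - 2cos(θᵢ-θⱼ)))`. -/
noncomputable def vortexPotential (N : ℕ) (θ : Fin N → ℝ) : ℝ :=
  - ∑ i : Fin N, ∑ j : Fin N,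
      if i < j then
        Real.cos (θ i - θ j) + (1 / 2) * Real.log (2 - 2 * Real.cos (θ i - θ j))
      else 0

/-- The Hessian matrix of the potential `V` at `θ`. -/
noncomputable def vortexHessian (N : ℕ) (θ : Fin N → ℝ) : Matrix (Fin N) (Fin N) ℝ :=
  fun i j => iteratedFDeriv ℝ 2 (vortexPotential N) θ ![Pi.single i 1, Pi.single j 1]

/-! ### Auxiliary scalar functions -/

noncomputable def vf (x : ℝ) : ℝ := Real.cos x + (1/2) * Real.log (2 - 2 * Real.cos x)
noncomputable def vg (x : ℝ) : ℝ := -Real.sin x + Real.sin x / (2 - 2 * Real.cos x)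
noncomputable def vh (x : ℝ) : ℝ := -Real.cos x - 1 / (2 - 2 * Real.cos x)

lemma hden {x : ℝ} (hx : Real.cos x < 1) : 2 - 2 * Real.cos x ≠ 0 := by nlinarith

lemma hasDerivAt_den (x : ℝ) : HasDerivAt (fun y => 2 - 2 * Real.cos y) (2 * Real.sin x) x := by
  simpa using ((Real.hasDerivAt_cos x).const_mul 2).const_sub 2

lemma hasDerivAt_vf {x : ℝ} (hx : Real.cos x < 1) : HasDerivAt vf (vg x) x := by
  have h1 := (Real.hasDerivAt_cos x).add (((hasDerivAt_den x).log (hden hx)).const_mul (1/2))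
  refine h1.congr_deriv ?_
  unfold vg
  field_simp [hden hx]

lemma hasDerivAt_vg {x : ℝ} (hx : Real.cos x < 1) : HasDerivAt vg (vh x) x := by
  have h1 := ((Real.hasDerivAt_sin x).neg).add
    ((Real.hasDerivAt_sin x).div (hasDerivAt_den x) (hden hx))
  refine h1.congr_deriv ?_
  unfold vh
  have hs := Real.sin_sq_add_cos_sq x
  rw [show Real.cos x * (2 - 2 * Real.cos x) - Real.sin x * (2 * Real.sin x) = -(2 - 2 * Real.cos x) by
    linear_combination (-2) * hs]
  rw [neg_div, pow_two, div_mul_eq_div_div, div_self (hden hx)]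
  ring

/-! ### Trigonometric values -/

lemma c34 : Real.cos (3 * π / 4) = -(Real.sqrt 2 / 2) := by
  rw [show (3 * π / 4 : ℝ) = π - π/4 by ring, Real.cos_pi_sub, Real.cos_pi_div_four]
lemma s34 : Real.sin (3 * π / 4) = Real.sqrt 2 / 2 := by
  rw [show (3 * π / 4 : ℝ) = π - π/4 by ring, Real.sin_pi_sub, Real.sin_pi_div_four]
lemma c54 : Real.cos (5 * π / 4) = -(Real.sqrt 2 / 2) := by
  rw [show (5 * π / 4 : ℝ) = π + π/4 by ring, Real.cos_add, Real.cos_pi_div_four,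
    Real.sin_pi_div_four]
  simp
lemma s54 : Real.sin (5 * π / 4) = -(Real.sqrt 2 / 2) := by
  rw [show (5 * π / 4 : ℝ) = π + π/4 by ring, Real.sin_add, Real.cos_pi_div_four,
    Real.sin_pi_div_four]
  simp

lemma c01 : Real.cos ((0:ℝ) - 3 * π / 4) = -(Real.sqrt 2 / 2) := by
  rw [show ((0:ℝ) - 3 * π / 4) = -(3 * π / 4) by ring, Real.cos_neg, c34]
lemma s01 : Real.sin ((0:ℝ) - 3 * π / 4) = -(Real.sqrt 2 / 2) := by
  rw [show ((0:ℝ) - 3 * π / 4) = -(3 * π / 4) by ring, Real.sin_neg, s34]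
lemma c02 : Real.cos ((0:ℝ) - 5 * π / 4) = -(Real.sqrt 2 / 2) := by
  rw [show ((0:ℝ) - 5 * π / 4) = -(5 * π / 4) by ring, Real.cos_neg, c54]
lemma s02 : Real.sin ((0:ℝ) - 5 * π / 4) = Real.sqrt 2 / 2 := by
  rw [show ((0:ℝ) - 5 * π / 4) = -(5 * π / 4) by ring, Real.sin_neg, s54]; ring
lemma c12 : Real.cos ((3 * π / 4 : ℝ) - 5 * π / 4) = 0 := by
  rw [show ((3 * π / 4 : ℝ) - 5 * π / 4) = -(π/2) by ring, Real.cos_neg, Real.cos_pi_div_two]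
lemma s12 : Real.sin ((3 * π / 4 : ℝ) - 5 * π / 4) = -1 := by
  rw [show ((3 * π / 4 : ℝ) - 5 * π / 4) = -(π/2) by ring, Real.sin_neg, Real.sin_pi_div_two]

lemma sqrt2_sq : Real.sqrt 2 ^ 2 = 2 := Real.sq_sqrt (by norm_num)
lemma sqrt2_pos : (0:ℝ) < Real.sqrt 2 := Real.sqrt_pos.mpr (by norm_num)
lemma sqrt2_lt : Real.sqrt 2 < 2 := by nlinarith [sqrt2_sq, sqrt2_pos]

lemma hlt01 : Real.cos ((0:ℝ) - 3 * π / 4) < 1 := by rw [c01]; nlinarith [sqrt2_pos]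
lemma hlt02 : Real.cos ((0:ℝ) - 5 * π / 4) < 1 := by rw [c02]; nlinarith [sqrt2_pos]
lemma hlt12 : Real.cos ((3 * π / 4 : ℝ) - 5 * π / 4) < 1 := by rw [c12]; norm_num

lemma vg01 : vg ((0:ℝ) - 3 * π / 4) = 1/2 := by
  unfold vg; rw [c01, s01]; rw [show (2:ℝ) - 2 * -(Real.sqrt 2 / 2) = 2 + Real.sqrt 2 by ring]; have := sqrt2_pos; field_simp; nlinarith [sqrt2_sq, sqrt2_pos]
lemma vg02 : vg ((0:ℝ) - 5 * π / 4) = -(1/2) := by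
  unfold vg; rw [c02, s02]; rw [show (2:ℝ) - 2 * -(Real.sqrt 2 / 2) = 2 + Real.sqrt 2 by ring]; have := sqrt2_pos; field_simp; nlinarith [sqrt2_sq, sqrt2_pos]
lemma vg12 : vg ((3 * π / 4 : ℝ) - 5 * π / 4) = 1/2 := by
  unfold vg; rw [c12, s12]; norm_num
lemma vh01 : vh ((0:ℝ) - 3 * π / 4) = Real.sqrt 2 - 1 := by
  unfold vh; rw [c01]; rw [show (2:ℝ) - 2 * -(Real.sqrt 2 / 2) = 2 + Real.sqrt 2 by ring]; have := sqrt2_pos; field_simp; nlinarith [sqrt2_sq, sqrt2_pos]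
lemma vh02 : vh ((0:ℝ) - 5 * π / 4) = Real.sqrt 2 - 1 := by
  unfold vh; rw [c02]; rw [show (2:ℝ) - 2 * -(Real.sqrt 2 / 2) = 2 + Real.sqrt 2 by ring]; have := sqrt2_pos; field_simp; nlinarith [sqrt2_sq, sqrt2_pos]
lemma vh12 : vh ((3 * π / 4 : ℝ) - 5 * π / 4) = -(1/2) := by
  unfold vh; rw [c12]; norm_num

/-! ### The potential in explicit form and its derivatives -/

noncomputable def W (θ : Fin 3 → ℝ) : ℝ :=
  -(vf (θ 0 - θ 1) + vf (θ 0 - θ 2) + vf (θ 1 - θ 2))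

lemma vortexPotential_eq : vortexPotential 3 = W := by
  funext θ
  simp only [vortexPotential, W, vf, Fin.sum_univ_three]
  norm_num [Fin.lt_def]

noncomputable def pr (i : Fin 3) : (Fin 3 → ℝ) →L[ℝ] ℝ := ContinuousLinearMap.proj i

noncomputable def Lm (θ : Fin 3 → ℝ) : (Fin 3 → ℝ) →L[ℝ] ℝ :=
  -(vg (θ 0 - θ 1) • (pr 0 - pr 1) + vg (θ 0 - θ 2) • (pr 0 - pr 2)
    + vg (θ 1 - θ 2) • (pr 1 - pr 2))

lemma hasFDerivAt_pair (i j : Fin 3) (θ : Fin 3 → ℝ)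
    (h : Real.cos (θ i - θ j) < 1) :
    HasFDerivAt (fun θ : Fin 3 → ℝ => vf (θ i - θ j))
      (vg (θ i - θ j) • (pr i - pr j)) θ := by
  have hlin : HasFDerivAt (fun θ : Fin 3 → ℝ => θ i - θ j) (pr i - pr j) θ := by
    exact (pr i - pr j).hasFDerivAt
  exact (hasDerivAt_vf h).comp_hasFDerivAt θ hlin

lemma hasFDerivAt_W {θ : Fin 3 → ℝ} (h01 : Real.cos (θ 0 - θ 1) < 1)
    (h02 : Real.cos (θ 0 - θ 2) < 1) (h12 : Real.cos (θ 1 - θ 2) < 1) :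
    HasFDerivAt W (Lm θ) θ :=
  (((hasFDerivAt_pair 0 1 θ h01).add (hasFDerivAt_pair 0 2 θ h02)).add
    (hasFDerivAt_pair 1 2 θ h12)).neg

noncomputable def Mm (θ : Fin 3 → ℝ) : (Fin 3 → ℝ) →L[ℝ] ((Fin 3 → ℝ) →L[ℝ] ℝ) :=
  -(((vh (θ 0 - θ 1) • (pr 0 - pr 1)).smulRight (pr 0 - pr 1)
    + (vh (θ 0 - θ 2) • (pr 0 - pr 2)).smulRight (pr 0 - pr 2))
    + (vh (θ 1 - θ 2) • (pr 1 - pr 2)).smulRight (pr 1 - pr 2))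

lemma hasFDerivAt_coeff (i j : Fin 3) (θ : Fin 3 → ℝ)
    (h : Real.cos (θ i - θ j) < 1) :
    HasFDerivAt (fun θ : Fin 3 → ℝ => vg (θ i - θ j))
      (vh (θ i - θ j) • (pr i - pr j)) θ := by
  have hlin : HasFDerivAt (fun θ : Fin 3 → ℝ => θ i - θ j) (pr i - pr j) θ := by
    exact (pr i - pr j).hasFDerivAt
  exact (hasDerivAt_vg h).comp_hasFDerivAt θ hlin

lemma hasFDerivAt_term (i j : Fin 3) (θ : Fin 3 → ℝ)
    (h : Real.cos (θ i - θ j) < 1) :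
    HasFDerivAt (fun θ : Fin 3 → ℝ => vg (θ i - θ j) • (pr i - pr j))
      ((vh (θ i - θ j) • (pr i - pr j)).smulRight (pr i - pr j)) θ := by
  have := (hasFDerivAt_coeff i j θ h).smul (hasFDerivAt_const (pr i - pr j) θ)
  rw [smul_zero, zero_add] at this
  exact this

lemma hasFDerivAt_L {θ : Fin 3 → ℝ} (h01 : Real.cos (θ 0 - θ 1) < 1)
    (h02 : Real.cos (θ 0 - θ 2) < 1) (h12 : Real.cos (θ 1 - θ 2) < 1) :
    HasFDerivAt Lm (Mm θ) θ :=
  (((hasFDerivAt_term 0 1 θ h01).add (hasFDerivAt_term 0 2 θ h02)).add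
    (hasFDerivAt_term 1 2 θ h12)).neg

lemma Lm_apply (θ v : Fin 3 → ℝ) :
    Lm θ v = -(vg (θ 0 - θ 1) * (v 0 - v 1) + vg (θ 0 - θ 2) * (v 0 - v 2)
      + vg (θ 1 - θ 2) * (v 1 - v 2)) := by
  simp [Lm, pr]

lemma Mm_apply (θ v w : Fin 3 → ℝ) :
    Mm θ v w = -(vh (θ 0 - θ 1) * (v 0 - v 1) * (w 0 - w 1)
      + vh (θ 0 - θ 2) * (v 0 - v 2) * (w 0 - w 2)
      + vh (θ 1 - θ 2) * (v 1 - v 2) * (w 1 - w 2)) := by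
  simp [Mm, pr]

/-! ### Derivatives at the critical point -/

lemma theta_vals : (![0, 3 * π / 4, 5 * π / 4] : Fin 3 → ℝ) 0 = 0 ∧
    (![0, 3 * π / 4, 5 * π / 4] : Fin 3 → ℝ) 1 = 3 * π / 4 ∧
    (![0, 3 * π / 4, 5 * π / 4] : Fin 3 → ℝ) 2 = 5 * π / 4 := by
  refine ⟨rfl, rfl, rfl⟩

lemma key01 : Real.cos ((![0, 3 * π / 4, 5 * π / 4] : Fin 3 → ℝ) 0
    - (![0, 3 * π / 4, 5 * π / 4] : Fin 3 → ℝ) 1) < 1 := hlt01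
lemma key02 : Real.cos ((![0, 3 * π / 4, 5 * π / 4] : Fin 3 → ℝ) 0
    - (![0, 3 * π / 4, 5 * π / 4] : Fin 3 → ℝ) 2) < 1 := hlt02
lemma key12 : Real.cos ((![0, 3 * π / 4, 5 * π / 4] : Fin 3 → ℝ) 1
    - (![0, 3 * π / 4, 5 * π / 4] : Fin 3 → ℝ) 2) < 1 := hlt12

lemma fderiv_W_eventually :
    fderiv ℝ W =ᶠ[nhds (![0, 3 * π / 4, 5 * π / 4] : Fin 3 → ℝ)] Lm := by
  have hc : ∀ i j : Fin 3, Continuous fun θ : Fin 3 → ℝ => Real.cos (θ i - θ j) :=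
    fun i j => Real.continuous_cos.comp ((continuous_apply i).sub (continuous_apply j))
  have hopen : IsOpen {θ : Fin 3 → ℝ | Real.cos (θ 0 - θ 1) < 1 ∧
      Real.cos (θ 0 - θ 2) < 1 ∧ Real.cos (θ 1 - θ 2) < 1} :=
    (isOpen_lt (hc 0 1) continuous_const).and
      ((isOpen_lt (hc 0 2) continuous_const).and (isOpen_lt (hc 1 2) continuous_const))
  have hmem : (![0, 3 * π / 4, 5 * π / 4] : Fin 3 → ℝ) ∈ {θ : Fin 3 → ℝ |
      Real.cos (θ 0 - θ 1) < 1 ∧ Real.cos (θ 0 - θ 2) < 1 ∧ Real.cos (θ 1 - θ 2) < 1} :=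
    ⟨key01, key02, key12⟩
  filter_upwards [hopen.mem_nhds hmem] with θ hθ
  exact (hasFDerivAt_W hθ.1 hθ.2.1 hθ.2.2).fderiv

lemma snd_deriv_eq :
    fderiv ℝ (fderiv ℝ W) (![0, 3 * π / 4, 5 * π / 4] : Fin 3 → ℝ)
      = Mm (![0, 3 * π / 4, 5 * π / 4] : Fin 3 → ℝ) := by
  rw [fderiv_W_eventually.fderiv_eq]
  exact (hasFDerivAt_L key01 key02 key12).fderiv

lemma hessian_entry (i j : Fin 3) :
    vortexHessian 3 (![0, 3 * π / 4, 5 * π / 4] : Fin 3 → ℝ) i j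
      = Mm (![0, 3 * π / 4, 5 * π / 4] : Fin 3 → ℝ) (Pi.single i 1) (Pi.single j 1) := by
  rw [vortexHessian, vortexPotential_eq, iteratedFDeriv_two_apply, snd_deriv_eq]
  simp

noncomputable def sq2 : ℝ := Real.sqrt 2

noncomputable def Hm : Matrix (Fin 3) (Fin 3) ℝ :=
  ![![2 - 2*sq2, sq2 - 1, sq2 - 1],
    ![sq2 - 1, 3/2 - sq2, -(1/2)],
    ![sq2 - 1, -(1/2), 3/2 - sq2]]

lemma hessian_eq : vortexHessian 3 (![0, 3 * π / 4, 5 * π / 4] : Fin 3 → ℝ) = Hm := by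
  funext i j
  rw [hessian_entry, Mm_apply]
  have e0 : (![0, 3 * π / 4, 5 * π / 4] : Fin 3 → ℝ) 0 = 0 := rfl
  have e1 : (![0, 3 * π / 4, 5 * π / 4] : Fin 3 → ℝ) 1 = 3 * π / 4 := rfl
  have e2 : (![0, 3 * π / 4, 5 * π / 4] : Fin 3 → ℝ) 2 = 5 * π / 4 := rfl
  rw [e0, e1, e2, vh01, vh02, vh12]
  fin_cases i <;> fin_cases j <;>
    simp [Hm, sq2, Pi.single_apply, Matrix.vecHead, Matrix.vecTail] <;> ring

/-! ### The main theorem -/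

/-- For `N = 3`, the point `θ = (0, 3π/4, 5π/4)` is a critical point of
`V`, and the Hessian of `V` there has exactly one strictly positive eigenvalue, exactly
one strictly negative eigenvalue, and one zero eigenvalue with eigenvector `(1,1,1)`;
i.e. `θ` is a nondegenerate saddle point of `V`. -/
theorem three_vortex_saddle :
    (∀ j : Fin 3,
      fderiv ℝ (vortexPotential 3) ![0, 3 * π / 4, 5 * π / 4] (Pi.single j 1) = 0) ∧
    ∃ a b : ℝ, 0 < a ∧ b < 0 ∧
      (∀ μ : ℝ, (∃ v : Fin 3 → ℝ, v ≠ 0 ∧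
          (vortexHessian 3 ![0, 3 * π / 4, 5 * π / 4]).mulVec v = μ • v) ↔
        (μ = a ∨ μ = b ∨ μ = 0)) ∧
      (vortexHessian 3 ![0, 3 * π / 4, 5 * π / 4]).mulVec ![1, 1, 1] = 0 ∧
      (∀ v : Fin 3 → ℝ,
        (vortexHessian 3 ![0, 3 * π / 4, 5 * π / 4]).mulVec v = 0 ↔
          ∃ c : ℝ, v = c • ![1, 1, 1]) := by
  have hs2 := sqrt2_sq
  have hsp := sqrt2_pos
  have hsl := sqrt2_lt
  constructor
  · -- critical point
    intro j
    rw [vortexPotential_eq, (hasFDerivAt_W key01 key02 key12).fderiv, Lm_apply]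
    have e0 : (![0, 3 * π / 4, 5 * π / 4] : Fin 3 → ℝ) 0 = 0 := rfl
    have e1 : (![0, 3 * π / 4, 5 * π / 4] : Fin 3 → ℝ) 1 = 3 * π / 4 := rfl
    have e2 : (![0, 3 * π / 4, 5 * π / 4] : Fin 3 → ℝ) 2 = 5 * π / 4 := rfl
    rw [e0, e1, e2, vg01, vg02, vg12]
    fin_cases j <;> simp [Pi.single_apply]
  · refine ⟨2 - sq2, 3 - 3 * sq2, by simp [sq2], by simp [sq2]; nlinarith, ?_, ?_, ?_⟩
    · -- eigenvalues
      intro μ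
      constructor
      · rintro ⟨v, hv, hev⟩
        rw [hessian_eq] at hev
        have h0 := congrFun hev 0
        have h1 := congrFun hev 1
        have h2 := congrFun hev 2
        simp [Hm, Matrix.mulVec, dotProduct, Fin.sum_univ_three, Matrix.vecHead, Matrix.vecTail] at h0 h1 h2
        by_contra hcon
        push_neg at hcon
        obtain ⟨ha, hb, h0'⟩ := hcon
        apply hv
        have e1 : v 0 + v 1 + v 2 = 0 := by
          have : μ * (v 0 + v 1 + v 2) = 0 := by linarith [h0, h1, h2]
          rcases mul_eq_zero.mp this with h | h
          · exact absurd h h0'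
          · exact h
        have e2 : v 1 - v 2 = 0 := by
          have : (2 - sq2 - μ) * (v 1 - v 2) = 0 := by unfold sq2 at *; linarith [h1, h2]
          rcases mul_eq_zero.mp this with h | h
          · exact absurd (by linarith : μ = 2 - sq2) ha
          · exact h
        have e3 : 2 * v 0 - v 1 - v 2 = 0 := by
          have : (3 - 3 * sq2 - μ) * (2 * v 0 - v 1 - v 2) = 0 := by
            unfold sq2 at *; linarith [h0, h1, h2]
          rcases mul_eq_zero.mp this with h | h
          · exact absurd (by linarith : μ = 3 - 3 * sq2) hb
          · exact h
        funext i
        fin_cases i <;> simp <;> linarith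
      · rintro (rfl | rfl | rfl)
        · refine ⟨![0, 1, -1], ?_, ?_⟩
          · intro h; have := congrFun h 1; simp at this
          · rw [hessian_eq]
            funext i
            fin_cases i <;>
              simp [Hm, Matrix.mulVec, dotProduct, Fin.sum_univ_three, Matrix.vecHead, Matrix.vecTail] <;> ring
        · refine ⟨![2, -1, -1], ?_, ?_⟩
          · intro h; have := congrFun h 0; simp at this
          · rw [hessian_eq]
            funext i
            fin_cases i <;>
              simp [Hm, Matrix.mulVec, dotProduct, Fin.sum_univ_three, Matrix.vecHead, Matrix.vecTail] <;> ring
        · refine ⟨![1, 1, 1], ?_, ?_⟩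
          · intro h; have := congrFun h 0; simp at this
          · rw [hessian_eq]
            funext i
            fin_cases i <;>
              simp [Hm, Matrix.mulVec, dotProduct, Fin.sum_univ_three, Matrix.vecHead, Matrix.vecTail] <;> ring
    · -- kernel vector (1,1,1)
      rw [hessian_eq]
      funext i
      fin_cases i <;>
        simp [Hm, Matrix.mulVec, dotProduct, Fin.sum_univ_three, Matrix.vecHead, Matrix.vecTail] <;> ring
    · -- kernel characterization
      intro v
      rw [hessian_eq]
      constructor
      · intro hev
        have h0 := congrFun hev 0
        have h1 := congrFun hev 1
        have h2 := congrFun hev 2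
        simp [Hm, Matrix.mulVec, dotProduct, Fin.sum_univ_three, Matrix.vecHead, Matrix.vecTail] at h0 h1 h2
        refine ⟨v 0, ?_⟩
        have e2 : v 1 - v 2 = 0 := by
          have h : (2 - sq2) * (v 1 - v 2) = 0 := by unfold sq2 at *; linarith [h1, h2]
          rcases mul_eq_zero.mp h with h | h
          · refine absurd h fun hh => ?_
            unfold sq2 at hh; nlinarith
          · exact h
        have e3 : 2 * v 0 - v 1 - v 2 = 0 := by
          have h : (3 - 3 * sq2) * (2 * v 0 - v 1 - v 2) = 0 := by
            unfold sq2 at *; linarith [h0, h1, h2]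
          rcases mul_eq_zero.mp h with h | h
          · refine absurd h fun hh => ?_
            unfold sq2 at hh; nlinarith
          · exact h
        funext i
        fin_cases i <;> simp <;> linarith
      · rintro ⟨c, rfl⟩
        funext i
        fin_cases i <;>
          simp [Hm, Matrix.mulVec, dotProduct, Fin.sum_univ_three, Matrix.vecHead, Matrix.vecTail] <;> ring
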